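/- For all real t and a ≥ 0, ∫₀¹ J₀(t·a·√(s − s²)) ds = sin(t·a/2)/(t·a/2), where J₀(z) = ∑_{j≥0} (−1)^j (z/2)^{2j}/(j!)² and the right side is interpreted as 1 when t·a = 0. -/

import Mathlib

open MeasureTheory intervalIntegral

private lemma fact_mul_prod_aux (m n : ℕ) :
    m.factorial * ∏ j ∈ Finset.range (n+1), (m+1+j) = (m+n+1).factorial := by
  induction n with
  | zero => simp [Nat.factorial_succ]; ring
  | succ n ih =>
    rw [Finset.prod_range_succ, ← mul_assoc, ih,
      show m + (n+1) + 1 = (m + n + 1) + 1 from by ring]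
    conv_rhs => rw [Nat.factorial_succ]
    ring

private lemma beta_nat_aux (m n : ℕ) :
    ∫ x in (0:ℝ)..1, x^m * (1-x)^n
      = (m.factorial * n.factorial : ℝ) / ((m+n+1).factorial : ℝ) := by
  have hre : 0 < Complex.re ((m:ℂ)+1) := by simp; positivity
  have h := Complex.betaIntegral_eval_nat_add_one_right hre n
  have key : Complex.betaIntegral ((m:ℂ)+1) ((n:ℂ)+1)
      = ((∫ x in (0:ℝ)..1, x^m*(1-x)^n : ℝ) : ℂ) := by
    rw [Complex.betaIntegral, ← intervalIntegral.integral_ofReal]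
    refine intervalIntegral.integral_congr fun x hx => ?_
    simp only [add_sub_cancel_right, Complex.cpow_natCast]
    push_cast
    ring
  have hprod : (∏ j ∈ Finset.range (n+1), ((m:ℂ)+1+j))
      = ((∏ j ∈ Finset.range (n+1), (m+1+j) : ℕ) : ℂ) := by
    push_cast; rfl
  rw [key, hprod] at h
  have h' : (∫ x in (0:ℝ)..1, x^m*(1-x)^n)
      = (n.factorial : ℝ) / ((∏ j ∈ Finset.range (n+1), (m+1+j) : ℕ) : ℝ) := by
    rw [show ((n.factorial:ℂ) / ((∏ j ∈ Finset.range (n+1), (m+1+j) : ℕ) : ℂ))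
        = (((n.factorial : ℝ) / ((∏ j ∈ Finset.range (n+1), (m+1+j) : ℕ) : ℝ) : ℝ) : ℂ)
        from by push_cast; ring] at h
    exact_mod_cast h
  rw [h', ← fact_mul_prod_aux m n]
  have h1 : (m.factorial : ℝ) ≠ 0 := by positivity
  have h2 : ((∏ j ∈ Finset.range (n+1), (m+1+j) : ℕ) : ℝ) ≠ 0 := by
    have : (∏ j ∈ Finset.range (n+1), (m+1+j) : ℕ) ≠ 0 := by positivity
    exact_mod_cast this
  push_cast
  field_simp

noncomputable def J0 (z : ℝ) : ℝ :=
  ∑' j : ℕ, (-1:ℝ)^j * (z/2)^(2*j) / ((j.factorial : ℝ))^2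

private lemma J0_integral_swap (c : ℝ) :
    ∫ s in (0:ℝ)..1, J0 (c * Real.sqrt (s - s^2))
      = ∑' j : ℕ, ∫ s in Set.Ioc (0:ℝ) 1,
          (-1:ℝ)^j * ((c/2)^(2*j) * (s - s^2)^j) / ((j.factorial : ℝ))^2 := by
  set F : ℕ → ℝ → ℝ := fun j s =>
    (-1:ℝ)^j * ((c/2)^(2*j) * (s - s^2)^j) / ((j.factorial : ℝ))^2 with hF
  have hcont : ∀ j, Continuous (F j) := by
    intro j; fun_prop
  have hFint : ∀ j, Integrable (F j) (volume.restrict (Set.Ioc (0:ℝ) 1)) :=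
    fun j => (hcont j).integrableOn_Ioc
  have hbound : ∀ j, ∀ s ∈ Set.Ioc (0:ℝ) 1, ‖F j s‖ ≤ (c^2/16)^j / ((j.factorial : ℝ))^2 := by
    intro j s hs
    have h1 : 0 ≤ s - s^2 := by nlinarith [hs.1, hs.2]
    have h2 : s - s^2 ≤ 1/4 := by nlinarith [sq_nonneg (s - 1/2)]
    have : ‖F j s‖ = (c/2)^(2*j) * (s - s^2)^j / ((j.factorial : ℝ))^2 := by
      rw [hF]
      rw [Real.norm_eq_abs, abs_div, abs_mul, abs_mul, abs_pow, abs_pow, abs_pow]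
      simp [abs_neg, abs_of_nonneg h1, pow_mul, sq_abs]
    rw [this]
    have h3 : (c/2)^(2*j) * (s - s^2)^j ≤ (c^2/16)^j := by
      calc (c/2)^(2*j) * (s - s^2)^j ≤ (c/2)^(2*j) * (1/4)^j :=
            mul_le_mul_of_nonneg_left (pow_le_pow_left₀ h1 h2 j)
              ((even_two_mul j).pow_nonneg _)
          _ = (c^2/16)^j := by
            rw [pow_mul, ← mul_pow]; ring_nf
    gcongr
  have hb : Summable (fun j => (c^2/16)^j / ((j.factorial : ℝ))^2) := by
    apply Summable.of_nonneg_of_le (fun j => by positivity)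
      (fun j => ?_) (Real.summable_pow_div_factorial (c^2/16))
    gcongr
    all_goals exact le_self_pow₀ (Nat.one_le_cast.mpr j.factorial_pos) two_ne_zero
  have hsum : Summable fun j => ∫ s in Set.Ioc (0:ℝ) 1, ‖F j s‖ := by
    refine Summable.of_nonneg_of_le
      (fun j => integral_nonneg fun s => norm_nonneg _) (fun j => ?_) hb
    calc ∫ s in Set.Ioc (0:ℝ) 1, ‖F j s‖
        ≤ ∫ _ in Set.Ioc (0:ℝ) 1, (c^2/16)^j / ((j.factorial : ℝ))^2 := by
          apply setIntegral_mono_on (hFint j).norm (integrableOn_const ?_)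
            measurableSet_Ioc (hbound j)
          simp
      _ = (c^2/16)^j / ((j.factorial : ℝ))^2 := by simp
  rw [intervalIntegral.integral_of_le (by norm_num : (0:ℝ) ≤ 1)]
  have hcongr : ∫ s in Set.Ioc (0:ℝ) 1, J0 (c * Real.sqrt (s - s^2))
      = ∫ s in Set.Ioc (0:ℝ) 1, ∑' j, F j s := by
    refine setIntegral_congr_fun measurableSet_Ioc fun s hs => ?_
    have h1 : 0 ≤ s - s^2 := by nlinarith [hs.1, hs.2]
    rw [J0]
    refine tsum_congr fun j => ?_
    have : (c * Real.sqrt (s - s^2) / 2)^(2*j) = (c/2)^(2*j) * (s - s^2)^j := by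
      rw [show c * Real.sqrt (s - s^2) / 2 = (c/2) * Real.sqrt (s - s^2) from by ring,
        mul_pow, pow_mul (Real.sqrt _), Real.sq_sqrt h1]
    rw [this]
  rw [hcongr, ← MeasureTheory.integral_tsum_of_summable_integral_norm hFint hsum]

private lemma J0_term_integral (c : ℝ) (j : ℕ) :
    ∫ s in Set.Ioc (0:ℝ) 1,
        (-1:ℝ)^j * ((c/2)^(2*j) * (s - s^2)^j) / ((j.factorial : ℝ))^2
      = (-1:ℝ)^j * (c/2)^(2*j) / ((2*j+1).factorial : ℝ) := by
  rw [← intervalIntegral.integral_of_le (by norm_num : (0:ℝ) ≤ 1)]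
  have h : ∀ s : ℝ, (-1:ℝ)^j * ((c/2)^(2*j) * (s - s^2)^j) / ((j.factorial : ℝ))^2
      = ((-1:ℝ)^j * (c/2)^(2*j) / ((j.factorial : ℝ))^2) * (s^j * (1-s)^j) := by
    intro s
    rw [show s - s^2 = s * (1-s) from by ring, mul_pow]
    ring
  simp_rw [h]
  rw [intervalIntegral.integral_const_mul, beta_nat_aux j j]
  have hfac : ((j.factorial : ℝ)) ≠ 0 := by positivity
  rw [show ((j+j+1).factorial : ℝ) = ((2*j+1).factorial : ℝ) from by rw [two_mul]]
  field_simp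

private lemma J0_final_sum (c : ℝ) :
    (∑' j : ℕ, (-1:ℝ)^j * (c/2)^(2*j) / ((2*j+1).factorial : ℝ))
      = if c = 0 then 1 else Real.sin (c/2) / (c/2) := by
  by_cases hc : c = 0
  · rw [if_pos hc, hc]
    rw [tsum_eq_single 0 (fun j hj => by
      simp [zero_pow, Nat.pos_of_ne_zero hj, mul_ne_zero two_ne_zero hj])]
    norm_num
  · rw [if_neg hc]
    set x := c/2 with hx
    have hx0 : x ≠ 0 := by simp [hx, hc]
    have hs := (Real.hasSum_sin x).div_const x
    have heq : (fun j : ℕ => ((-1:ℝ)^j * x^(2*j+1) / ((2*j+1).factorial : ℝ)) / x)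
        = fun j : ℕ => (-1:ℝ)^j * x^(2*j) / ((2*j+1).factorial : ℝ) := by
      funext j
      rw [pow_succ]
      field_simp
    rw [heq] at hs
    exact hs.tsum_eq

theorem J0_simplex_integral (t a : ℝ) (ha : 0 ≤ a) :
    ∫ s in (0:ℝ)..1, J0 (t * a * Real.sqrt (s - s^2))
      = if t * a = 0 then 1 else Real.sin (t*a/2) / (t*a/2) := by
  rw [J0_integral_swap (t*a)]
  simp_rw [J0_term_integral (t*a)]
  exact J0_final_sum (t*a)
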